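/- Let u, v, w be nonnegative forms on a complex vector space X, and let p be a nonnegative form with p[x] = sup_{n∈ℕ} inf_{y∈X} (v[x−y] + n·w[y]) for all x ∈ X (i.e. p = D_w v). Then inf_{y∈X} (v[x−y] + w[y]) ≤ inf_{y∈X} (u[x−y] + w[y]) holds for all x ∈ X (i.e. v : w ≤ u : w for the parallel sums) if and only if p ≤ u. (This is the adjunction property of the antitone Galois connection induced by parallel addition and parallel subtraction.) -/

import Mathlib

open scoped ComplexOrder

/-- A sesquilinear form (linear in the first, conjugate-linear in the second variable)
`t : X →ₗ[ℂ] X →ₗ⋆[ℂ] ℂ` is nonnegative if `t(x,x) ≥ 0` for all `x`. -/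
def IsNNForm {X : Type*} [AddCommGroup X] [Module ℂ X]
    (t : X →ₗ[ℂ] X →ₗ⋆[ℂ] ℂ) : Prop :=
  ∀ x : X, 0 ≤ t x x

/-- The quadratic form of a form: `t[x] = t(x,x)`, viewed as a real number. -/
def FQ {X : Type*} [AddCommGroup X] [Module ℂ X]
    (t : X →ₗ[ℂ] X →ₗ⋆[ℂ] ℂ) (x : X) : ℝ :=
  (t x x).re

/-- The order on forms: `t ≤ w` iff `t[x] ≤ w[x]` for all `x`. -/
def FLe {X : Type*} [AddCommGroup X] [Module ℂ X]
    (t w : X →ₗ[ℂ] X →ₗ⋆[ℂ] ℂ) : Prop :=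
  ∀ x : X, FQ t x ≤ FQ w x

/-- `t` and `w` are singular: the only nonnegative form below both is the zero form. -/
def SingForm {X : Type*} [AddCommGroup X] [Module ℂ X]
    (t w : X →ₗ[ℂ] X →ₗ⋆[ℂ] ℂ) : Prop :=
  ∀ s : X →ₗ[ℂ] X →ₗ⋆[ℂ] ℂ, IsNNForm s → FLe s t → FLe s w → s = 0

section helpers
variable {X : Type*} [AddCommGroup X] [Module ℂ X]

lemma FQ_nonneg {t : X →ₗ[ℂ] X →ₗ⋆[ℂ] ℂ} (ht : IsNNForm t) (x : X) : 0 ≤ FQ t x := by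
  have h := ht x; rw [Complex.le_def] at h; simpa [FQ] using h.1

lemma FQ_zero (t : X →ₗ[ℂ] X →ₗ⋆[ℂ] ℂ) : FQ t 0 = 0 := by simp [FQ]

lemma apply_pair (t : X →ₗ[ℂ] X →ₗ⋆[ℂ] ℂ) (x a b : X) (c d : ℂ) :
    t x (c • a + d • b) = (starRingEnd ℂ c) * t x a + (starRingEnd ℂ d) * t x b := by
  rw [map_add, LinearMap.map_smulₛₗ, LinearMap.map_smulₛₗ, smul_eq_mul, smul_eq_mul]

lemma expand_pair (t : X →ₗ[ℂ] X →ₗ⋆[ℂ] ℂ) (a b : X) (c d : ℂ) :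
    t (c • a + d • b) (c • a + d • b)
      = c * (starRingEnd ℂ c) * t a a + c * (starRingEnd ℂ d) * t a b
        + d * (starRingEnd ℂ c) * t b a + d * (starRingEnd ℂ d) * t b b := by
  have h1 : t (c • a + d • b) = c • t a + d • t b := by
    rw [map_add, map_smul, map_smul]
  rw [h1, LinearMap.add_apply, LinearMap.smul_apply, LinearMap.smul_apply,
    apply_pair, apply_pair, smul_eq_mul, smul_eq_mul]
  ring

lemma FQ_expand (t : X →ₗ[ℂ] X →ₗ⋆[ℂ] ℂ) (a b : X) (r s : ℝ) :
    FQ t ((r : ℂ) • a + (s : ℂ) • b)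
      = r ^ 2 * FQ t a + r * s * (t a b + t b a).re + s ^ 2 * FQ t b := by
  have h2 : t ((r:ℂ) • a + (s:ℂ) • b) ((r:ℂ) • a + (s:ℂ) • b)
      = ((r^2 : ℝ) : ℂ) * t a a + ((r*s : ℝ) : ℂ) * (t a b + t b a) + ((s^2 : ℝ) : ℂ) * t b b := by
    rw [expand_pair t a b (r : ℂ) (s : ℂ), Complex.conj_ofReal, Complex.conj_ofReal]
    push_cast; ring
  show (t ((r:ℂ) • a + (s:ℂ) • b) ((r:ℂ) • a + (s:ℂ) • b)).re = _
  rw [h2, Complex.add_re, Complex.add_re, Complex.re_ofReal_mul, Complex.re_ofReal_mul,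
    Complex.re_ofReal_mul, Complex.add_re]
  unfold FQ; ring

lemma FQ_smul_real (t : X →ₗ[ℂ] X →ₗ⋆[ℂ] ℂ) (r : ℝ) (a : X) :
    FQ t ((r : ℂ) • a) = r ^ 2 * FQ t a := by
  have h := FQ_expand t a a r 0
  simpa using h

lemma FQ_add_eq (t : X →ₗ[ℂ] X →ₗ⋆[ℂ] ℂ) (a b : X) :
    FQ t (a + b) = FQ t a + (t a b + t b a).re + FQ t b := by
  have h := FQ_expand t a b 1 1
  simpa using h

lemma FQ_sub_eq (t : X →ₗ[ℂ] X →ₗ⋆[ℂ] ℂ) (a b : X) :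
    FQ t (a - b) = FQ t a - (t a b + t b a).re + FQ t b := by
  have h := FQ_expand t a b 1 (-1)
  have hv : (1 : ℂ) • a + ((-1 : ℝ) : ℂ) • b = a - b := by
    push_cast; rw [one_smul, neg_one_smul]; abel
  rw [show ((1:ℝ) : ℂ) = (1:ℂ) by norm_num] at h
  rw [hv] at h
  rw [h]; ring

lemma FQ_midpoint {t : X →ₗ[ℂ] X →ₗ⋆[ℂ] ℂ} (ht : IsNNForm t) (a b : X) :
    2 * FQ t (((1:ℝ)/2 : ℂ) • (a + b)) ≤ FQ t a + FQ t b := by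
  have h1 : FQ t (((1:ℝ)/2 : ℂ) • (a + b)) = ((1:ℝ)/2)^2 * FQ t (a + b) := by
    have := FQ_smul_real t ((1:ℝ)/2) (a + b)
    rw [← this]; norm_num
  have h2 := FQ_add_eq t a b
  have h3 := FQ_sub_eq t a b
  have h4 := FQ_nonneg ht (a - b)
  rw [h1]; nlinarith [FQ_nonneg ht (a+b)]

lemma FQ_add_le_weighted {t : X →ₗ[ℂ] X →ₗ⋆[ℂ] ℂ} (ht : IsNNForm t) (a b : X)
    {μ : ℝ} (hμ : 0 < μ) :
    FQ t (a + b) ≤ (1 + μ) * FQ t a + (1 + μ⁻¹) * FQ t b := by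
  set c : ℝ := Real.sqrt μ with hc
  have hc2 : c ^ 2 = μ := Real.sq_sqrt hμ.le
  have hc0 : 0 < c := Real.sqrt_pos.2 hμ
  have h := FQ_expand t a b c (-c⁻¹)
  have h4 := FQ_nonneg ht ((c : ℂ) • a + ((-c⁻¹ : ℝ) : ℂ) • b)
  rw [h] at h4
  have h2 := FQ_add_eq t a b
  have hcc : c * c⁻¹ = 1 := mul_inv_cancel₀ hc0.ne'
  have hcinv : (-c⁻¹)^2 = μ⁻¹ := by
    rw [neg_pow, inv_pow, hc2]; norm_num
  rw [hc2, hcinv] at h4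
  have hx : c * -c⁻¹ = -1 := by rw [mul_neg, hcc]
  rw [hx] at h4
  linarith

variable {u v w : X →ₗ[ℂ] X →ₗ⋆[ℂ] ℂ}

lemma bdd_range (hv : IsNNForm v) (hw : IsNNForm w) (x : X) (c : ℝ) (hc : 0 ≤ c) :
    BddBelow (Set.range fun y : X => FQ v (x - y) + c * FQ w y) := by
  refine ⟨0, ?_⟩
  rintro r ⟨y, rfl⟩
  exact add_nonneg (FQ_nonneg hv _) (mul_nonneg hc (FQ_nonneg hw _))

lemma bdd_range1 (hv : IsNNForm v) (hw : IsNNForm w) (x : X) :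
    BddBelow (Set.range fun y : X => FQ v (x - y) + FQ w y) := by
  refine ⟨0, ?_⟩
  rintro r ⟨y, rfl⟩
  exact add_nonneg (FQ_nonneg hv _) (FQ_nonneg hw _)

lemma key_step (hu : IsNNForm u) (hv : IsNNForm v) (hw : IsNNForm w)
    (hH : ∀ x : X, (⨅ y : X, (FQ v (x - y) + FQ w y)) ≤ ⨅ y : X, (FQ u (x - y) + FQ w y)) :
    ∀ k : ℕ, ∀ x y : X, ∀ ε : ℝ, 0 < ε → ∃ d : X,
      ((2:ℝ)^k) * FQ v (x - d) + FQ w (y + (((2:ℝ)^k : ℝ) : ℂ) • d)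
        ≤ ((2:ℝ)^k) * FQ u x + FQ w y + ε := by
  intro k
  induction k with
  | zero =>
    intro x y ε hε
    have h1 : (⨅ z : X, (FQ v (x + y - z) + FQ w z)) ≤ FQ u x + FQ w y := by
      refine (hH (x+y)).trans ?_
      refine (ciInf_le (bdd_range1 hu hw (x+y)) y).trans ?_
      simp
    have h2 : (⨅ z : X, (FQ v (x + y - z) + FQ w z)) < FQ u x + FQ w y + ε :=
      lt_of_le_of_lt h1 (by linarith)
    obtain ⟨z, hz⟩ := exists_lt_of_ciInf_lt h2
    refine ⟨z - y, ?_⟩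
    have e1 : x - (z - y) = x + y - z := by abel
    have e2 : y + (((2:ℝ)^0 : ℝ) : ℂ) • (z - y) = z := by
      have : (((2:ℝ)^0 : ℝ) : ℂ) = 1 := by norm_num
      rw [this, one_smul]; abel
    rw [e1, e2, pow_zero, one_mul, one_mul]
    linarith
  | succ k ih =>
    intro x y ε hε
    obtain ⟨d₁, h₁⟩ := ih x y (ε/2) (half_pos hε)
    obtain ⟨d₂, h₂⟩ := ih x (y + (((2:ℝ)^k : ℝ) : ℂ) • d₁) (ε/2) (half_pos hε)
    refine ⟨((1:ℝ)/2 : ℂ) • (d₁ + d₂), ?_⟩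
    have ev : y + (((2:ℝ)^(k+1) : ℝ) : ℂ) • (((1:ℝ)/2 : ℂ) • (d₁ + d₂))
        = (y + (((2:ℝ)^k : ℝ) : ℂ) • d₁) + (((2:ℝ)^k : ℝ) : ℂ) • d₂ := by
      have hh : (((2:ℝ)^(k+1) : ℝ) : ℂ) = 2 * (((2:ℝ)^k : ℝ) : ℂ) := by push_cast; ring
      rw [hh]
      have hhalf : ((1:ℝ)/2 : ℂ) = (2:ℂ)⁻¹ := by norm_num
      rw [hhalf]
      module
    have ec : x - ((1:ℝ)/2 : ℂ) • (d₁ + d₂) = ((1:ℝ)/2 : ℂ) • ((x - d₁) + (x - d₂)) := by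
      have hhalf : ((1:ℝ)/2 : ℂ) = (2:ℂ)⁻¹ := by norm_num
      rw [hhalf]
      module
    have hconv : 2 * FQ v (x - ((1:ℝ)/2 : ℂ) • (d₁ + d₂)) ≤ FQ v (x - d₁) + FQ v (x - d₂) := by
      rw [ec]; exact FQ_midpoint hv _ _
    rw [ev]
    have hMpos : (0:ℝ) < (2:ℝ)^k := by positivity
    have hp : (2:ℝ)^(k+1) = 2 * (2:ℝ)^k := by ring
    rw [hp]
    nlinarith [h₁, h₂, hconv]
end helpers

theorem galois_connection_adjunction
    {X : Type*} [AddCommGroup X] [Module ℂ X]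
    (u v w p : X →ₗ[ℂ] X →ₗ⋆[ℂ] ℂ)
    (hu : IsNNForm u) (hv : IsNNForm v) (hw : IsNNForm w) (hp : IsNNForm p)
    (hpd : ∀ x : X, FQ p x = ⨆ n : ℕ, ⨅ y : X, (FQ v (x - y) + (n : ℝ) * FQ w y)) :
    (∀ x : X, (⨅ y : X, (FQ v (x - y) + FQ w y)) ≤ ⨅ y : X, (FQ u (x - y) + FQ w y)) ↔
      FLe p u := by
  constructor
  · -- forward direction
    intro hH x
    rw [hpd x]
    refine ciSup_le fun n => ?_
    show (⨅ y : X, (FQ v (x - y) + (n:ℝ) * FQ w y)) ≤ FQ u x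
    have hle : (⨅ y : X, (FQ v (x - y) + (n:ℝ) * FQ w y))
        ≤ ⨅ y : X, (FQ v (x - y) + ((2:ℝ)^n) * FQ w y) := by
      refine ciInf_mono (bdd_range hv hw x (n:ℝ) (Nat.cast_nonneg n)) fun y => ?_
      have h1 : (n:ℝ) ≤ (2:ℝ)^n := by
        exact_mod_cast (Nat.lt_two_pow_self (n := n)).le
      have h2 := FQ_nonneg hw y
      nlinarith
    refine hle.trans ?_
    refine le_of_forall_pos_le_add fun ε hε => ?_
    obtain ⟨d, hd⟩ := key_step hu hv hw hH n x 0 ε hε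
    rw [zero_add, FQ_smul_real, FQ_zero] at hd
    set M := (2:ℝ)^n with hMdef
    have hM1 : (1:ℝ) ≤ M := one_le_pow₀ (by norm_num)
    have hMpos : (0:ℝ) < M := by positivity
    have hεM : ε ≤ M * ε := by nlinarith
    have h5 : M * (FQ v (x - d) + M * FQ w d) ≤ M * (FQ u x + ε) := by nlinarith [hd]
    have h6 : FQ v (x - d) + M * FQ w d ≤ FQ u x + ε :=
      le_of_mul_le_mul_left h5 hMpos
    calc (⨅ y : X, (FQ v (x - y) + M * FQ w y)) ≤ FQ v (x - d) + M * FQ w d :=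
          ciInf_le (bdd_range hv hw x M hMpos.le) d
      _ ≤ FQ u x + ε := h6
  · -- backward direction
    intro hple x
    refine le_ciInf fun y => ?_
    refine le_of_forall_pos_le_add fun ε hε => ?_
    set δ := ε / 2 with hδdef
    have hδ : 0 < δ := by positivity
    set μ := δ / (FQ w y + 1) with hμdef
    have hwy := FQ_nonneg hw y
    have hμ : 0 < μ := by positivity
    obtain ⟨n, hn⟩ := exists_nat_ge (1 + μ⁻¹)
    have hbA : BddAbove (Set.range fun m : ℕ => ⨅ z : X, (FQ v (x - y - z) + (m:ℝ) * FQ w z)) := by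
      refine ⟨FQ v (x - y), ?_⟩
      rintro r ⟨m, rfl⟩
      refine (ciInf_le (bdd_range hv hw (x-y) (m:ℝ) (Nat.cast_nonneg m)) 0).trans ?_
      simp [FQ_zero]
    have h1 : (⨅ z : X, (FQ v (x - y - z) + (n:ℝ) * FQ w z)) ≤ FQ p (x - y) := by
      rw [hpd (x - y)]
      exact le_ciSup hbA n
    have h2 : (⨅ z : X, (FQ v (x - y - z) + (n:ℝ) * FQ w z)) < FQ p (x - y) + δ :=
      lt_of_le_of_lt h1 (by linarith)
    obtain ⟨z, hz⟩ := exists_lt_of_ciInf_lt h2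
    have hwz := FQ_nonneg hw z
    have hw2 : FQ w (y + z) ≤ (1 + μ) * FQ w y + (1 + μ⁻¹) * FQ w z :=
      FQ_add_le_weighted hw y z hμ
    have hμy : μ * FQ w y ≤ δ := by
      rw [hμdef]
      rw [div_mul_eq_mul_div, div_le_iff₀ (by positivity)]
      nlinarith
    have hnz : (1 + μ⁻¹) * FQ w z ≤ (n:ℝ) * FQ w z :=
      mul_le_mul_of_nonneg_right hn hwz
    have hpu := hple (x - y)
    calc (⨅ y' : X, (FQ v (x - y') + FQ w y'))
        ≤ FQ v (x - (y + z)) + FQ w (y + z) := ciInf_le (bdd_range1 hv hw x) (y + z)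
      _ = FQ v (x - y - z) + FQ w (y + z) := by rw [sub_sub]
      _ ≤ FQ u (x - y) + FQ w y + ε := by linarith
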